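/- For every θ > 0 and c0 > 0 there exists a constant C > 0, depending only on θ and c0, with the following property (Lemma 2, broadband regime). Let R, R3, L, D > 0 with θ D R ≤ 6 L R3, let α > 1 and α3 ≥ 8α/θ, and set H = αR, H3 = α3 R3. Let Y ⊂ ℝ³ be a finite set separated by at least (H, H, H3) whose points have cross-range parts of Euclidean norm at most D/√2, and let z ∈ ℝ³ have cross-range part of norm at most D/√2. Let I : ℝ³ × ℝ³ → [0, ∞) satisfy I(z, y) ≤ c0 · exp(−|z̃ − ỹ|²/(8R²) − (θ/R3)·|z3 − y3 + (|z̃|² − |ỹ|²)/(2L)|) for all y ∈ Y. Then for every point N(z) ∈ Y maximizing y ↦ I(z, y) over Y, one has Σ_{y ∈ Y \ {N(z)}} I(z, y) ≤ C · (exp(−α²/32) + exp(−α)) / α³. -/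

import Mathlib

open Finset

lemma aux_geom_nat (r : ℝ) (h0 : 0 ≤ r) (h1 : r < 1) (F : Finset ℕ) :
    ∑ k ∈ F, r ^ k ≤ 1 / (1 - r) := by
  have h1r : 0 < 1 - r := by linarith
  calc ∑ k ∈ F, r ^ k ≤ ∑ k ∈ Finset.range ((F.sup id) + 1), r ^ k := by
        apply Finset.sum_le_sum_of_subset_of_nonneg
        · intro k hk
          exact Finset.mem_range.mpr (Nat.lt_succ_of_le (Finset.le_sup (f := id) hk))
        · intros; positivity
    _ = (r ^ ((F.sup id) + 1) - 1) / (r - 1) := geom_sum_eq (by linarith) _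
    _ = (1 - r ^ ((F.sup id) + 1)) / (1 - r) := by
        rw [div_eq_div_iff (by linarith) (by linarith)]; ring
    _ ≤ 1 / (1 - r) := by
        gcongr
        nlinarith [pow_nonneg h0 ((F.sup id) + 1)]

lemma aux_geom_int (r : ℝ) (h0 : 0 ≤ r) (h1 : r < 1) (F : Finset ℤ) :
    ∑ a ∈ F, r ^ (a.natAbs - 1) ≤ 5 / (1 - r) := by
  have h1r : 0 < 1 - r := by linarith
  have key : ∑ k ∈ F.image (fun a : ℤ => a.natAbs - 1),
      (∑ a ∈ F.filter (fun a : ℤ => a.natAbs - 1 = k), r ^ (a.natAbs - 1))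
      = ∑ a ∈ F, r ^ (a.natAbs - 1) := by
    apply Finset.sum_fiberwise_of_maps_to
    intro x hx
    exact Finset.mem_image_of_mem _ hx
  rw [← key]
  have hfib : ∀ k ∈ F.image (fun a : ℤ => a.natAbs - 1),
      (∑ a ∈ F.filter (fun a : ℤ => a.natAbs - 1 = k), r ^ (a.natAbs - 1)) ≤ 5 * r ^ k := by
    intro k _
    calc (∑ a ∈ F.filter (fun a : ℤ => a.natAbs - 1 = k), r ^ (a.natAbs - 1))
        = ∑ a ∈ F.filter (fun a : ℤ => a.natAbs - 1 = k), r ^ k := by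
          apply Finset.sum_congr rfl
          intro a ha
          rw [(Finset.mem_filter.mp ha).2]
      _ ≤ ∑ _a ∈ ({(k : ℤ) + 1, -((k : ℤ) + 1), -1, 0, 1} : Finset ℤ), r ^ k := by
          apply Finset.sum_le_sum_of_subset_of_nonneg
          · intro a ha
            have h2 := (Finset.mem_filter.mp ha).2
            simp only [Finset.mem_insert, Finset.mem_singleton]
            omega
          · intros; positivity
      _ ≤ 5 * r ^ k := by
          rw [Finset.sum_const]
          have hc : (({(k : ℤ) + 1, -((k : ℤ) + 1), -1, 0, 1} : Finset ℤ).card) ≤ 5 := by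
            apply le_trans (Finset.card_insert_le _ _)
            apply Nat.succ_le_succ
            apply le_trans (Finset.card_insert_le _ _)
            apply Nat.succ_le_succ
            apply le_trans (Finset.card_insert_le _ _)
            apply Nat.succ_le_succ
            apply le_trans (Finset.card_insert_le _ _)
            simp
          calc (({(k : ℤ) + 1, -((k : ℤ) + 1), -1, 0, 1} : Finset ℤ).card) • r ^ k
              = (({(k : ℤ) + 1, -((k : ℤ) + 1), -1, 0, 1} : Finset ℤ).card : ℝ) * r ^ k := by
                rw [nsmul_eq_mul]
            _ ≤ 5 * r ^ k := by
                apply mul_le_mul_of_nonneg_right _ (by positivity)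
                exact_mod_cast hc
  calc _ ≤ ∑ k ∈ F.image (fun a : ℤ => a.natAbs - 1), 5 * r ^ k :=
        Finset.sum_le_sum hfib
    _ = 5 * ∑ k ∈ F.image (fun a : ℤ => a.natAbs - 1), r ^ k := by
        rw [Finset.mul_sum]
    _ ≤ 5 * (1 / (1 - r)) := by
        apply mul_le_mul_of_nonneg_left (aux_geom_nat r h0 h1 _) (by norm_num)
    _ = 5 / (1 - r) := by ring

lemma aux_prod3 (r : ℝ) (h0 : 0 ≤ r) (h1 : r < 1) (S : Finset (ℤ × ℤ × ℤ)) :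
    ∑ j ∈ S, r ^ (j.1.natAbs - 1 + (j.2.1.natAbs - 1) + (j.2.2.natAbs - 1))
      ≤ 125 / (1 - r) ^ 3 := by
  have h1r : 0 < 1 - r := by linarith
  calc ∑ j ∈ S, r ^ (j.1.natAbs - 1 + (j.2.1.natAbs - 1) + (j.2.2.natAbs - 1))
      ≤ ∑ j ∈ (S.image Prod.fst) ×ˢ ((S.image fun j => j.2.1) ×ˢ (S.image fun j => j.2.2)),
          r ^ (j.1.natAbs - 1 + (j.2.1.natAbs - 1) + (j.2.2.natAbs - 1)) := by
        apply Finset.sum_le_sum_of_subset_of_nonneg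
        · intro j hj
          refine Finset.mem_product.mpr ⟨Finset.mem_image_of_mem _ hj,
            Finset.mem_product.mpr ⟨Finset.mem_image_of_mem _ hj, Finset.mem_image_of_mem _ hj⟩⟩
        · intros; positivity
    _ = (∑ a ∈ S.image Prod.fst, r ^ (a.natAbs - 1)) *
        ((∑ b ∈ S.image fun j => j.2.1, r ^ (b.natAbs - 1)) *
         (∑ c ∈ S.image fun j => j.2.2, r ^ (c.natAbs - 1))) := by
        simp_rw [Finset.sum_product, pow_add, Finset.sum_mul, Finset.mul_sum, mul_assoc]
    _ ≤ (5 / (1 - r)) * ((5 / (1 - r)) * (5 / (1 - r))) := by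
        have g1 := aux_geom_int r h0 h1 (S.image Prod.fst)
        have g2 := aux_geom_int r h0 h1 (S.image fun j => j.2.1)
        have g3 := aux_geom_int r h0 h1 (S.image fun j => j.2.2)
        have n1 : (0:ℝ) ≤ ∑ a ∈ S.image Prod.fst, r ^ (a.natAbs - 1) := by positivity
        have n2 : (0:ℝ) ≤ ∑ b ∈ S.image (fun j : ℤ×ℤ×ℤ => j.2.1), r ^ (b.natAbs - 1) := by positivity
        have n3 : (0:ℝ) ≤ ∑ c ∈ S.image (fun j : ℤ×ℤ×ℤ => j.2.2), r ^ (c.natAbs - 1) := by positivity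
        have h5 : (0:ℝ) ≤ 5 / (1-r) := by positivity
        nlinarith [mul_le_mul g2 g3 n3 h5]
    _ = 125 / (1 - r) ^ 3 := by field_simp; ring

lemma aux_floor (x s : ℝ) (hs : 0 < s) :
    ((⌊x / s⌋.natAbs - 1 : ℕ) : ℝ) * s ≤ |x| := by
  have h1 : (⌊x / s⌋ : ℝ) ≤ x / s := Int.floor_le _
  have h2 : x / s < ⌊x / s⌋ + 1 := Int.lt_floor_add_one _
  set j := ⌊x / s⌋ with hj
  rcases le_or_gt 0 j with hpos | hneg
  · have hx : 0 ≤ x := by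
      have h0 : (0:ℝ) ≤ (j:ℝ) := by exact_mod_cast hpos
      have := (le_div_iff₀ hs).mp (le_trans h0 h1)
      linarith
    have hm : ((j.natAbs - 1 : ℕ) : ℝ) ≤ (j : ℝ) := by
      have h3 : ((j.natAbs - 1 : ℕ) : ℤ) ≤ j := by omega
      exact_mod_cast h3
    rw [abs_of_nonneg hx]
    calc ((j.natAbs - 1 : ℕ) : ℝ) * s ≤ (j:ℝ) * s := mul_le_mul_of_nonneg_right hm hs.le
      _ ≤ x := (le_div_iff₀ hs).mp h1
  · have hm : ((j.natAbs - 1 : ℕ) : ℝ) = -(j:ℝ) - 1 := by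
      have h3 : ((j.natAbs - 1 : ℕ) : ℤ) = -j - 1 := by omega
      push_cast at h3 ⊢
      exact_mod_cast h3
    have hx : x < ((j:ℝ) + 1) * s := by
      have := (div_lt_iff₀ hs).mp h2
      linarith [this]
    have hj1 : (j:ℝ) + 1 ≤ 0 := by
      have : j + 1 ≤ 0 := by omega
      exact_mod_cast this
    have hxneg : x ≤ 0 := by nlinarith
    rw [abs_of_nonpos hxneg, hm]
    nlinarith

lemma aux_floor_close (x x' s : ℝ) (hs : 0 < s) (h : ⌊x / s⌋ = ⌊x' / s⌋) :
    |x - x'| < s := by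
  have h1 : (⌊x / s⌋ : ℝ) ≤ x / s := Int.floor_le _
  have h2 : x / s < ⌊x / s⌋ + 1 := Int.lt_floor_add_one _
  have h3 : (⌊x' / s⌋ : ℝ) ≤ x' / s := Int.floor_le _
  have h4 : x' / s < ⌊x' / s⌋ + 1 := Int.lt_floor_add_one _
  rw [h] at h1 h2
  have e1 : x / s * s = x := div_mul_cancel₀ x hs.ne'
  have e2 : x' / s * s = x' := div_mul_cancel₀ x' hs.ne'
  rw [abs_sub_lt_iff]
  constructor
  · have h5 : x / s - x' / s < 1 := by linarith
    have h6 := mul_lt_mul_of_pos_right h5 hs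
    rw [sub_mul, e1, e2, one_mul] at h6
    linarith
  · have h5 : x' / s - x / s < 1 := by linarith
    have h6 := mul_lt_mul_of_pos_right h5 hs
    rw [sub_mul, e1, e2, one_mul] at h6
    linarith

set_option maxHeartbeats 16000000 in
/-- Lemma 2, broadband regime: the interaction coefficient of a well-separated source
set is bounded by `C · (exp(-α²/32) + exp(-α)) / α³`. Points of `ℝ³` are written
`(z₁, z₂, z₃)` with cross-range part `(z₁, z₂)` and range coordinate `z₃`. -/
theorem stmt3 (θ c0 : ℝ) (hθ : 0 < θ) (hc0 : 0 < c0) :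
    ∃ C : ℝ, 0 < C ∧
      ∀ (R R3 L D α α3 H H3 : ℝ) (Y : Finset (ℝ × ℝ × ℝ))
        (I : (ℝ × ℝ × ℝ) → (ℝ × ℝ × ℝ) → ℝ),
        0 < R → 0 < R3 → 0 < L → 0 < D → θ * D * R ≤ 6 * L * R3 →
        1 < α → 8 * α / θ ≤ α3 → H = α * R → H3 = α3 * R3 →
        -- `Y` is separated by at least `(H, H, H3)`
        (∀ y ∈ Y, ∀ y' ∈ Y, y ≠ y' →
          H ≤ |y.1 - y'.1| ∨ H ≤ |y.2.1 - y'.2.1| ∨ H3 ≤ |y.2.2 - y'.2.2|) →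
        -- the points of `Y` have cross-range parts of norm at most `D/√2`
        (∀ y ∈ Y, Real.sqrt (y.1 ^ 2 + y.2.1 ^ 2) ≤ D / Real.sqrt 2) →
        -- `I` takes values in `[0, ∞)`
        (∀ z y, 0 ≤ I z y) →
        ∀ (z : ℝ × ℝ × ℝ), Real.sqrt (z.1 ^ 2 + z.2.1 ^ 2) ≤ D / Real.sqrt 2 →
        -- broadband cross-correlation bound
        (∀ y ∈ Y,
          I z y ≤ c0 * Real.exp (-((z.1 - y.1) ^ 2 + (z.2.1 - y.2.1) ^ 2) / (8 * R ^ 2)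
            - (θ / R3) * |z.2.2 - y.2.2 +
                ((z.1 ^ 2 + z.2.1 ^ 2) - (y.1 ^ 2 + y.2.1 ^ 2)) / (2 * L)|)) →
        -- for every maximizer `n = N(z)` of `I z ·` over `Y`
        ∀ n ∈ Y, (∀ y ∈ Y, I z y ≤ I z n) →
          ∑ y ∈ Y.erase n, I z y ≤
            C * (Real.exp (-α ^ 2 / 32) + Real.exp (-α)) / α ^ 3 := by
  have hq0 : (0:ℝ) ≤ Real.exp (-(1/8 : ℝ)) := (Real.exp_pos _).le
  have hq1 : Real.exp (-(1/8 : ℝ)) < 1 := Real.exp_lt_one_iff.mpr (by norm_num)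
  have h1q : 0 < 1 - Real.exp (-(1/8 : ℝ)) := by linarith
  refine ⟨c0 * Real.exp 4 * (125 / (1 - Real.exp (-(1/8 : ℝ))) ^ 3) *
      ((128 ^ 3 + 27) + 27 * Real.exp 144), ?_, ?_⟩
  · have h125 : (0:ℝ) < 125 / (1 - Real.exp (-(1/8 : ℝ))) ^ 3 := by positivity
    have h144 : (0:ℝ) < Real.exp 144 := Real.exp_pos _
    positivity
  intro R R3 L D α α3 H H3 Y I hR hR3 hL hD hDRL hα hα3 hH hH3 hsep hYD hI0 z hzD hIb n hn hmax
  have hα0 : (0:ℝ) < α := lt_trans one_pos hα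
  have hH0 : 0 < H := by rw [hH]; positivity
  have hs3 : 0 < 2 * α * R3 / θ := by positivity
  set φf : ℝ × ℝ × ℝ → ℝ := fun y =>
    z.2.2 - y.2.2 + ((z.1 ^ 2 + z.2.1 ^ 2) - (y.1 ^ 2 + y.2.1 ^ 2)) / (2 * L) with hφf
  set Ef : ℝ × ℝ × ℝ → ℝ := fun y =>
    ((z.1 - y.1) ^ 2 + (z.2.1 - y.2.1) ^ 2) / (8 * R ^ 2) + (θ / R3) * |φf y| with hEf
  clear_value φf Ef
  have hB0 : ∀ y : ℝ × ℝ × ℝ, 0 ≤ (θ / R3) * |φf y| := fun y =>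
    mul_nonneg (div_nonneg hθ.le hR3.le) (abs_nonneg _)
  have hA0 : ∀ y : ℝ × ℝ × ℝ, 0 ≤ ((z.1 - y.1) ^ 2 + (z.2.1 - y.2.1) ^ 2) / (8 * R ^ 2) :=
    fun y => by positivity
  have hIE : ∀ y ∈ Y, I z y ≤ c0 * Real.exp (-Ef y) := by
    intro y hy
    refine le_trans (hIb y hy) (le_of_eq ?_)
    congr 1
    simp only [hEf, hφf]
    ring
  have hyD2 : ∀ y : ℝ × ℝ × ℝ, Real.sqrt (y.1 ^ 2 + y.2.1 ^ 2) ≤ D / Real.sqrt 2 →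
      y.1 ^ 2 + y.2.1 ^ 2 ≤ D ^ 2 / 2 := by
    intro y hy
    have h2 : (0:ℝ) ≤ y.1 ^ 2 + y.2.1 ^ 2 := by positivity
    have h3 := pow_le_pow_left₀ (Real.sqrt_nonneg _) hy 2
    rw [Real.sq_sqrt h2, div_pow, Real.sq_sqrt (by norm_num : (0:ℝ) ≤ 2)] at h3
    exact h3
  have habs : ∀ y ∈ Y, |y.1| + |y.2.1| ≤ D := by
    intro y hy
    have h2 := hyD2 y (hYD y hy)
    nlinarith [sq_abs y.1, sq_abs y.2.1, abs_nonneg y.1, abs_nonneg y.2.1,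
      sq_nonneg (|y.1| - |y.2.1|), hD]
  -- square-difference bound
  have hsqd : ∀ y : ℝ × ℝ × ℝ, ∀ y' : ℝ × ℝ × ℝ,
      |(y'.1 ^ 2 + y'.2.1 ^ 2) - (y.1 ^ 2 + y.2.1 ^ 2)| ≤
        (|y'.1| + |y.1|) * |y.1 - y'.1| + (|y'.2.1| + |y.2.1|) * |y.2.1 - y'.2.1| := by
    intro y y'
    have e1 : |y'.1 ^ 2 - y.1 ^ 2| ≤ (|y'.1| + |y.1|) * |y.1 - y'.1| := by
      rw [show y'.1 ^ 2 - y.1 ^ 2 = (y'.1 + y.1) * (y'.1 - y.1) by ring, abs_mul,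
        abs_sub_comm y'.1 y.1]
      exact mul_le_mul_of_nonneg_right (abs_add_le _ _) (abs_nonneg _)
    have e2 : |y'.2.1 ^ 2 - y.2.1 ^ 2| ≤ (|y'.2.1| + |y.2.1|) * |y.2.1 - y'.2.1| := by
      rw [show y'.2.1 ^ 2 - y.2.1 ^ 2 = (y'.2.1 + y.2.1) * (y'.2.1 - y.2.1) by ring, abs_mul,
        abs_sub_comm y'.2.1 y.2.1]
      exact mul_le_mul_of_nonneg_right (abs_add_le _ _) (abs_nonneg _)
    calc |(y'.1 ^ 2 + y'.2.1 ^ 2) - (y.1 ^ 2 + y.2.1 ^ 2)|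
        = |(y'.1 ^ 2 - y.1 ^ 2) + (y'.2.1 ^ 2 - y.2.1 ^ 2)| := by ring_nf
      _ ≤ |y'.1 ^ 2 - y.1 ^ 2| + |y'.2.1 ^ 2 - y.2.1 ^ 2| := abs_add_le _ _
      _ ≤ _ := by linarith
  -- phase-difference lower bound
  have hphid : ∀ y : ℝ × ℝ × ℝ, ∀ y' : ℝ × ℝ × ℝ, H3 ≤ |y.2.2 - y'.2.2| →
      H3 - ((|y'.1| + |y.1|) * |y.1 - y'.1| + (|y'.2.1| + |y.2.1|) * |y.2.1 - y'.2.1|) / (2 * L)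
        ≤ |φf y - φf y'| := by
    intro y y' h3
    have hd : φf y - φf y' =
        (y'.2.2 - y.2.2) + ((y'.1 ^ 2 + y'.2.1 ^ 2) - (y.1 ^ 2 + y.2.1 ^ 2)) / (2 * L) := by
      simp only [hφf]; ring
    have t1 : |y'.2.2 - y.2.2| ≤ |φf y - φf y'|
        + |((y'.1 ^ 2 + y'.2.1 ^ 2) - (y.1 ^ 2 + y.2.1 ^ 2)) / (2 * L)| := by
      calc |y'.2.2 - y.2.2|
          = |(φf y - φf y') - ((y'.1 ^ 2 + y'.2.1 ^ 2) - (y.1 ^ 2 + y.2.1 ^ 2)) / (2 * L)| := by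
            rw [hd]; ring_nf
        _ ≤ _ := abs_sub _ _
    have t2 : |((y'.1 ^ 2 + y'.2.1 ^ 2) - (y.1 ^ 2 + y.2.1 ^ 2)) / (2 * L)| ≤
        ((|y'.1| + |y.1|) * |y.1 - y'.1| + (|y'.2.1| + |y.2.1|) * |y.2.1 - y'.2.1|) / (2 * L) := by
      rw [abs_div, abs_of_pos (by positivity : (0:ℝ) < 2 * L)]
      gcongr
      exact hsqd y y'
    have t3 : H3 ≤ |y'.2.2 - y.2.2| := by rwa [abs_sub_comm] at h3
    linarith
  -- the pairwise separation estimate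
  set T : ℝ := min (α ^ 2 / 32) (4 * α - 144) with hT
  clear_value T
  have hpair : ∀ y ∈ Y, y ≠ n → 2 * T ≤ Ef y + Ef n := by
    intro y hy hyn
    have hTa : T ≤ α ^ 2 / 32 := by rw [hT]; exact min_le_left _ _
    have hTb : T ≤ 4 * α - 144 := by rw [hT]; exact min_le_right _ _
    rcases hsep y hy n hn hyn with hc | hc | hc
    · -- separation in the first cross-range coordinate
      have key : H ^ 2 / 2 ≤ (z.1 - y.1) ^ 2 + (z.1 - n.1) ^ 2 := by
        nlinarith [sq_abs (y.1 - n.1), sq_nonneg ((z.1 - y.1) + (z.1 - n.1)),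
          mul_self_le_mul_self hH0.le hc]
      have l1 : ((z.1 - y.1) ^ 2 + (z.1 - n.1) ^ 2) / (8 * R ^ 2) ≤ Ef y + Ef n := by
        simp only [hEf]
        have b1 := hB0 y
        have b2 := hB0 n
        have s1 : (0:ℝ) ≤ (z.2.1 - y.2.1) ^ 2 / (8 * R ^ 2) := by positivity
        have s2 : (0:ℝ) ≤ (z.2.1 - n.2.1) ^ 2 / (8 * R ^ 2) := by positivity
        simp only [add_div]
        linarith
      have l2 : H ^ 2 / 2 / (8 * R ^ 2) ≤ ((z.1 - y.1) ^ 2 + (z.1 - n.1) ^ 2) / (8 * R ^ 2) := by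
        gcongr
      have l3 : H ^ 2 / 2 / (8 * R ^ 2) = α ^ 2 / 16 := by
        rw [hH]; field_simp; ring
      linarith
    · -- separation in the second cross-range coordinate
      have key : H ^ 2 / 2 ≤ (z.2.1 - y.2.1) ^ 2 + (z.2.1 - n.2.1) ^ 2 := by
        nlinarith [sq_abs (y.2.1 - n.2.1), sq_nonneg ((z.2.1 - y.2.1) + (z.2.1 - n.2.1)),
          mul_self_le_mul_self hH0.le hc]
      have l1 : ((z.2.1 - y.2.1) ^ 2 + (z.2.1 - n.2.1) ^ 2) / (8 * R ^ 2) ≤ Ef y + Ef n := by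
        simp only [hEf]
        have b1 := hB0 y
        have b2 := hB0 n
        have s1 : (0:ℝ) ≤ (z.1 - y.1) ^ 2 / (8 * R ^ 2) := by positivity
        have s2 : (0:ℝ) ≤ (z.1 - n.1) ^ 2 / (8 * R ^ 2) := by positivity
        simp only [add_div]
        linarith
      have l2 : H ^ 2 / 2 / (8 * R ^ 2) ≤ ((z.2.1 - y.2.1) ^ 2 + (z.2.1 - n.2.1) ^ 2) / (8 * R ^ 2) := by
        gcongr
      have l3 : H ^ 2 / 2 / (8 * R ^ 2) = α ^ 2 / 16 := by
        rw [hH]; field_simp; ring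
      linarith
    · -- separation in range
      set u : ℝ := |y.1 - n.1| with hu
      set v : ℝ := |y.2.1 - n.2.1| with hv
      have hu0 : 0 ≤ u := abs_nonneg _
      have hv0 : 0 ≤ v := abs_nonneg _
      have hyab := habs y hy
      have hnab := habs n hn
      -- bound the correction term
      have hcor : (|n.1| + |y.1|) * u + (|n.2.1| + |y.2.1|) * v ≤ 2 * D * (u + v) := by
        nlinarith [abs_nonneg y.1, abs_nonneg y.2.1, abs_nonneg n.1, abs_nonneg n.2.1,
          mul_le_mul_of_nonneg_right
            (show |n.1| + |y.1| ≤ 2 * D by linarith [abs_nonneg y.2.1, abs_nonneg n.2.1]) hu0,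
          mul_le_mul_of_nonneg_right
            (show |n.2.1| + |y.2.1| ≤ 2 * D by linarith [abs_nonneg y.1, abs_nonneg n.1]) hv0]
      have hphi1 : H3 - (2 * D * (u + v)) / (2 * L) ≤ |φf y - φf n| := by
        have h1 := hphid y n hc
        have h2 : ((|n.1| + |y.1|) * u + (|n.2.1| + |y.2.1|) * v) / (2 * L)
            ≤ (2 * D * (u + v)) / (2 * L) := by gcongr
        linarith
      -- B-part lower bound
      have hBsum : 8 * α - 6 * (u + v) / R ≤ (θ / R3) * |φf y| + (θ / R3) * |φf n| := by
        have htri : |φf y - φf n| ≤ |φf y| + |φf n| := abs_sub _ _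
        have hθR3 : 0 ≤ θ / R3 := div_nonneg hθ.le hR3.le
        have hm := mul_le_mul_of_nonneg_left hphi1 hθR3
        have hm2 := mul_le_mul_of_nonneg_left htri hθR3
        have e1 : 8 * α ≤ (θ / R3) * H3 := by
          have ha : 8 * α ≤ α3 * θ := (div_le_iff₀ hθ).mp hα3
          have hb : (θ / R3) * H3 = α3 * θ := by
            rw [hH3]; field_simp
          linarith
        have e4 : (θ / R3) * ((2 * D * (u + v)) / (2 * L)) ≤ 6 * (u + v) / R := by
          have lhs_eq : (θ / R3) * ((2 * D * (u + v)) / (2 * L)) = (θ * D * (u + v)) / (R3 * L) := by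
            field_simp
          rw [lhs_eq, div_le_div_iff₀ (by positivity) hR]
          nlinarith [mul_le_mul_of_nonneg_right hDRL (add_nonneg hu0 hv0), hR.le, hR3.le, hL.le]
        have expand : (θ / R3) * (H3 - (2 * D * (u + v)) / (2 * L))
            = (θ / R3) * H3 - (θ / R3) * ((2 * D * (u + v)) / (2 * L)) := by ring
        rw [expand] at hm
        linarith
      -- A-part lower bound
      have hAsum : (u + v) ^ 2 / (32 * R ^ 2) ≤
          ((z.1 - y.1) ^ 2 + (z.2.1 - y.2.1) ^ 2) / (8 * R ^ 2)
          + ((z.1 - n.1) ^ 2 + (z.2.1 - n.2.1) ^ 2) / (8 * R ^ 2) := by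
        have num : (u + v) ^ 2 ≤ 4 * ((z.1 - y.1) ^ 2 + (z.2.1 - y.2.1) ^ 2
            + ((z.1 - n.1) ^ 2 + (z.2.1 - n.2.1) ^ 2)) := by
          nlinarith [sq_abs (y.1 - n.1), sq_abs (y.2.1 - n.2.1), sq_nonneg (u - v),
            sq_nonneg ((z.1 - y.1) + (z.1 - n.1)), sq_nonneg ((z.2.1 - y.2.1) + (z.2.1 - n.2.1))]
        have l4 : (u + v) ^ 2 / (32 * R ^ 2) ≤ (4 * ((z.1 - y.1) ^ 2 + (z.2.1 - y.2.1) ^ 2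
            + ((z.1 - n.1) ^ 2 + (z.2.1 - n.2.1) ^ 2))) / (32 * R ^ 2) := by gcongr
        have l5 : (4 * ((z.1 - y.1) ^ 2 + (z.2.1 - y.2.1) ^ 2
            + ((z.1 - n.1) ^ 2 + (z.2.1 - n.2.1) ^ 2))) / (32 * R ^ 2)
            = ((z.1 - y.1) ^ 2 + (z.2.1 - y.2.1) ^ 2) / (8 * R ^ 2)
            + ((z.1 - n.1) ^ 2 + (z.2.1 - n.2.1) ^ 2) / (8 * R ^ 2) := by
          field_simp; ring
        linarith
      -- quadratic absorption
      have hquad : 6 * (u + v) / R ≤ (u + v) ^ 2 / (32 * R ^ 2) + 288 := by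
        have comb : (u + v) ^ 2 / (32 * R ^ 2) + 288
            = ((u + v) ^ 2 + 288 * (32 * R ^ 2)) / (32 * R ^ 2) := by
          field_simp
        rw [comb, div_le_div_iff₀ hR (by positivity)]
        nlinarith [mul_nonneg (sq_nonneg (u + v - 96 * R)) hR.le, hR.le]
      have hEsum : Ef y + Ef n = ((z.1 - y.1) ^ 2 + (z.2.1 - y.2.1) ^ 2) / (8 * R ^ 2)
          + (θ / R3) * |φf y| + (((z.1 - n.1) ^ 2 + (z.2.1 - n.2.1) ^ 2) / (8 * R ^ 2)
          + (θ / R3) * |φf n|) := by simp only [hEf]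
      rw [hEsum]
      linarith
  -- bound via the maximizer
  have hTbound : ∀ y ∈ Y, y ≠ n → I z y ≤ c0 * Real.exp (-T) := by
    intro y hy hyn
    have hp := hpair y hy hyn
    rcases le_total (Ef y) (Ef n) with hcmp | hcmp
    · have hTn : T ≤ Ef n := by linarith
      calc I z y ≤ I z n := hmax y hy
        _ ≤ c0 * Real.exp (-Ef n) := hIE n hn
        _ ≤ c0 * Real.exp (-T) :=
            mul_le_mul_of_nonneg_left (Real.exp_le_exp.mpr (by linarith)) hc0.le
    · have hTy : T ≤ Ef y := by linarith
      calc I z y ≤ c0 * Real.exp (-Ef y) := hIE y hy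
        _ ≤ c0 * Real.exp (-T) :=
            mul_le_mul_of_nonneg_left (Real.exp_le_exp.mpr (by linarith)) hc0.le
  -- lattice injection
  set Jm : ℝ × ℝ × ℝ → ℤ × ℤ × ℤ := fun y =>
    (⌊(y.1 - z.1) / H⌋, ⌊(y.2.1 - z.2.1) / H⌋, ⌊φf y / (2 * α * R3 / θ)⌋) with hJm
  clear_value Jm
  have hEk : ∀ y ∈ Y, α / 8 * ((((Jm y).1.natAbs - 1) + ((Jm y).2.1.natAbs - 1)
      + ((Jm y).2.2.natAbs - 1) : ℕ) : ℝ) ≤ Ef y := by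
    intro y hy
    simp only [hJm]
    have f1 : ((⌊(y.1 - z.1) / H⌋.natAbs - 1 : ℕ) : ℝ) * H ≤ |y.1 - z.1| :=
      aux_floor _ _ hH0
    have f2 : ((⌊(y.2.1 - z.2.1) / H⌋.natAbs - 1 : ℕ) : ℝ) * H ≤ |y.2.1 - z.2.1| :=
      aux_floor _ _ hH0
    have f3 : ((⌊φf y / (2 * α * R3 / θ)⌋.natAbs - 1 : ℕ) : ℝ) * (2 * α * R3 / θ) ≤ |φf y| :=
      aux_floor _ _ hs3
    set m1 : ℕ := ⌊(y.1 - z.1) / H⌋.natAbs - 1 with hm1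
    set m2 : ℕ := ⌊(y.2.1 - z.2.1) / H⌋.natAbs - 1 with hm2
    set m3 : ℕ := ⌊φf y / (2 * α * R3 / θ)⌋.natAbs - 1 with hm3
    have hm10 : (0:ℝ) ≤ (m1:ℝ) := Nat.cast_nonneg _
    have hm20 : (0:ℝ) ≤ (m2:ℝ) := Nat.cast_nonneg _
    have hm30 : (0:ℝ) ≤ (m3:ℝ) := Nat.cast_nonneg _
    have g1 : (m1:ℝ) ^ 2 * H ^ 2 ≤ (z.1 - y.1) ^ 2 := by
      nlinarith [sq_abs (y.1 - z.1), mul_self_le_mul_self (by positivity : (0:ℝ) ≤ (m1:ℝ) * H) f1,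
        abs_nonneg (y.1 - z.1)]
    have g2 : (m2:ℝ) ^ 2 * H ^ 2 ≤ (z.2.1 - y.2.1) ^ 2 := by
      nlinarith [sq_abs (y.2.1 - z.2.1),
        mul_self_le_mul_self (by positivity : (0:ℝ) ≤ (m2:ℝ) * H) f2,
        abs_nonneg (y.2.1 - z.2.1)]
    have g3 : 2 * α * (m3:ℝ) ≤ (θ / R3) * |φf y| := by
      have := mul_le_mul_of_nonneg_left f3 (div_nonneg hθ.le hR3.le)
      have e3 : (θ / R3) * ((m3:ℝ) * (2 * α * R3 / θ)) = 2 * α * (m3:ℝ) := by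
        field_simp
      linarith [e3 ▸ this]
    have hA : α ^ 2 * ((m1:ℝ) ^ 2 + (m2:ℝ) ^ 2) / 8
        ≤ ((z.1 - y.1) ^ 2 + (z.2.1 - y.2.1) ^ 2) / (8 * R ^ 2) := by
      rw [div_le_div_iff₀ (by norm_num) (by positivity)]
      rw [hH] at g1 g2
      nlinarith [g1, g2, sq_nonneg R]
    have hcast1 : (m1:ℝ) ≤ (m1:ℝ) ^ 2 := by
      have : m1 ≤ m1 ^ 2 := Nat.le_self_pow (by norm_num) m1
      exact_mod_cast this
    have hcast2 : (m2:ℝ) ≤ (m2:ℝ) ^ 2 := by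
      have : m2 ≤ m2 ^ 2 := Nat.le_self_pow (by norm_num) m2
      exact_mod_cast this
    have hnum : α / 8 * ((m1:ℝ) + (m2:ℝ) + (m3:ℝ))
        ≤ α ^ 2 * ((m1:ℝ) ^ 2 + (m2:ℝ) ^ 2) / 8 + 2 * α * (m3:ℝ) := by
      nlinarith [mul_le_mul_of_nonneg_left hcast1 (by positivity : (0:ℝ) ≤ α ^ 2),
        mul_le_mul_of_nonneg_left hcast2 (by positivity : (0:ℝ) ≤ α ^ 2),
        mul_nonneg hα0.le hm10, mul_nonneg hα0.le hm20, mul_nonneg hα0.le hm30,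
        mul_le_mul_of_nonneg_right (show (1:ℝ) ≤ α by linarith)
          (mul_nonneg hα0.le (add_nonneg hm10 hm20))]
    have hcast3 : ((m1 + m2 + m3 : ℕ) : ℝ) = (m1:ℝ) + (m2:ℝ) + (m3:ℝ) := by push_cast; ring
    have hfin : α / 8 * ((m1:ℝ) + (m2:ℝ) + (m3:ℝ)) ≤ Ef y := by
      simp only [hEf]
      linarith [hA, g3, hnum]
    calc α / 8 * (((m1 + m2 + m3 : ℕ)) : ℝ) = α / 8 * ((m1:ℝ) + (m2:ℝ) + (m3:ℝ)) := by
          rw [hcast3]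
      _ ≤ Ef y := hfin
  -- per-term bound
  have hterm : ∀ y ∈ Y, y ≠ n → I z y ≤ (c0 * Real.exp (4 - T)) *
      Real.exp (-(1/8 : ℝ)) ^ ((((Jm y).1.natAbs - 1) + ((Jm y).2.1.natAbs - 1)
      + ((Jm y).2.2.natAbs - 1) : ℕ)) := by
    intro y hy hyn
    set k : ℕ := (((Jm y).1.natAbs - 1) + ((Jm y).2.1.natAbs - 1)
      + ((Jm y).2.2.natAbs - 1) : ℕ) with hk
    have hTb : T ≤ 4 * α - 144 := by rw [hT]; exact min_le_right _ _
    have hfin : I z y ≤ c0 * Real.exp (-(T + ((k:ℝ) / 8 - 4))) := by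
      rcases le_or_gt ((k:ℝ)) 32 with h32 | h32
      · refine le_trans (hTbound y hy hyn) (mul_le_mul_of_nonneg_left
          (Real.exp_le_exp.mpr (by linarith)) hc0.le)
      · have hEky := hEk y hy
        have step : T + ((k:ℝ) / 8 - 4) ≤ α / 8 * (k:ℝ) := by nlinarith [hα, h32]
        refine le_trans (hIE y hy) (mul_le_mul_of_nonneg_left
          (Real.exp_le_exp.mpr (by linarith)) hc0.le)
    calc I z y ≤ c0 * Real.exp (-(T + ((k:ℝ) / 8 - 4))) := hfin
      _ = (c0 * Real.exp (4 - T)) * Real.exp (-(1/8 : ℝ)) ^ k := by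
          rw [mul_assoc, ← Real.exp_nat_mul, ← Real.exp_add]
          congr 2
          push_cast
          ring
  -- injectivity of the lattice map on Y
  have hinj : ∀ y ∈ Y, ∀ y' ∈ Y, Jm y = Jm y' → y = y' := by
    intro y hy y' hy' hJ
    by_contra hne
    simp only [hJm, Prod.mk.injEq] at hJ
    obtain ⟨hJ1, hJ2, hJ3⟩ := hJ
    have d1 : |y.1 - y'.1| < H := by
      have := aux_floor_close _ _ _ hH0 hJ1
      rw [show (y.1 - z.1) - (y'.1 - z.1) = y.1 - y'.1 by ring] at this
      exact this
    have d2 : |y.2.1 - y'.2.1| < H := by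
      have := aux_floor_close _ _ _ hH0 hJ2
      rw [show (y.2.1 - z.2.1) - (y'.2.1 - z.2.1) = y.2.1 - y'.2.1 by ring] at this
      exact this
    have d3 : |φf y - φf y'| < 2 * α * R3 / θ := aux_floor_close _ _ _ hs3 hJ3
    rcases hsep y hy y' hy' hne with hc | hc | hc
    · linarith
    · linarith
    · -- range separation contradicts closeness of the phases
      have hyab := habs y hy
      have hyab' := habs y' hy'
      have hcor : (|y'.1| + |y.1|) * |y.1 - y'.1| + (|y'.2.1| + |y.2.1|) * |y.2.1 - y'.2.1|
          ≤ 2 * D * H := by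
        nlinarith [abs_nonneg (y.1 - y'.1), abs_nonneg (y.2.1 - y'.2.1),
          abs_nonneg y.1, abs_nonneg y'.1, abs_nonneg y.2.1, abs_nonneg y'.2.1,
          mul_le_mul_of_nonneg_left d1.le (show (0:ℝ) ≤ |y'.1| + |y.1| by positivity),
          mul_le_mul_of_nonneg_left d2.le (show (0:ℝ) ≤ |y'.2.1| + |y.2.1| by positivity)]
      have hphi1 : H3 - (2 * D * H) / (2 * L) ≤ |φf y - φf y'| := by
        have h1 := hphid y y' hc
        have h2 : ((|y'.1| + |y.1|) * |y.1 - y'.1| + (|y'.2.1| + |y.2.1|) * |y.2.1 - y'.2.1|)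
            / (2 * L) ≤ (2 * D * H) / (2 * L) := by gcongr
        linarith
    -- now the numeric contradiction
      have k1 : 8 * α * R3 / θ ≤ H3 := by
        rw [hH3]
        have h1 : 8 * α / θ * R3 ≤ α3 * R3 := mul_le_mul_of_nonneg_right hα3 hR3.le
        have h2 : 8 * α / θ * R3 = 8 * α * R3 / θ := by ring
        linarith [h2 ▸ h1]
      have k2 : (2 * D * H) / (2 * L) ≤ 6 * α * R3 / θ := by
        rw [hH, div_le_div_iff₀ (by positivity) hθ]
        nlinarith [mul_le_mul_of_nonneg_right hDRL hα0.le, hL.le, hθ.le]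
      ring_nf at hphi1 k1 k2 d3
      linarith
  -- assemble the sum
  have hsum : ∑ y ∈ Y.erase n, I z y ≤ (c0 * Real.exp (4 - T)) *
      (125 / (1 - Real.exp (-(1/8 : ℝ))) ^ 3) := by
    calc ∑ y ∈ Y.erase n, I z y
        ≤ ∑ y ∈ Y.erase n, (c0 * Real.exp (4 - T)) *
          Real.exp (-(1/8 : ℝ)) ^ ((((Jm y).1.natAbs - 1) + ((Jm y).2.1.natAbs - 1)
            + ((Jm y).2.2.natAbs - 1) : ℕ)) := by
          apply Finset.sum_le_sum
          intro y hy
          exact hterm y (Finset.mem_of_mem_erase hy) (Finset.ne_of_mem_erase hy)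
      _ = (c0 * Real.exp (4 - T)) * ∑ y ∈ Y.erase n,
          Real.exp (-(1/8 : ℝ)) ^ ((((Jm y).1.natAbs - 1) + ((Jm y).2.1.natAbs - 1)
            + ((Jm y).2.2.natAbs - 1) : ℕ)) := by
          rw [Finset.mul_sum]
      _ ≤ (c0 * Real.exp (4 - T)) * (125 / (1 - Real.exp (-(1/8 : ℝ))) ^ 3) := by
          apply mul_le_mul_of_nonneg_left _ (by positivity)
          calc ∑ y ∈ Y.erase n,
              Real.exp (-(1/8 : ℝ)) ^ ((((Jm y).1.natAbs - 1) + ((Jm y).2.1.natAbs - 1)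
                + ((Jm y).2.2.natAbs - 1) : ℕ))
              ≤ ∑ y ∈ Y, Real.exp (-(1/8 : ℝ)) ^ ((((Jm y).1.natAbs - 1)
                + ((Jm y).2.1.natAbs - 1) + ((Jm y).2.2.natAbs - 1) : ℕ)) := by
                apply Finset.sum_le_sum_of_subset_of_nonneg (Finset.erase_subset n Y)
                intros; positivity
            _ = ∑ j ∈ Y.image Jm, Real.exp (-(1/8 : ℝ)) ^ ((j.1.natAbs - 1)
                + (j.2.1.natAbs - 1) + (j.2.2.natAbs - 1)) :=
                (Finset.sum_image (f := fun j : ℤ × ℤ × ℤ => Real.exp (-(1/8 : ℝ)) ^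
                  ((j.1.natAbs - 1) + (j.2.1.natAbs - 1) + (j.2.2.natAbs - 1))) hinj).symm
            _ ≤ 125 / (1 - Real.exp (-(1/8 : ℝ))) ^ 3 :=
                aux_prod3 _ hq0 hq1 _
  -- final absorption of the polynomial factor
  have hcube : α ^ 3 ≤ 27 * Real.exp α := by
    have h1 : α / 3 + 1 ≤ Real.exp (α / 3) := Real.add_one_le_exp _
    have h2 : α ≤ 3 * Real.exp (α / 3) := by linarith
    calc α ^ 3 ≤ (3 * Real.exp (α / 3)) ^ 3 := pow_le_pow_left₀ hα0.le h2 3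
      _ = 27 * Real.exp (α / 3) ^ 3 := by ring
      _ = 27 * Real.exp α := by
          rw [← Real.exp_nat_mul]
          congr 1
          push_cast
          ring
  have hsplit : Real.exp (-T) ≤ Real.exp (-(α ^ 2 / 32)) + Real.exp 144 * Real.exp (-(4 * α)) := by
    rcases min_cases (α ^ 2 / 32) (4 * α - 144) with ⟨hmin, _⟩ | ⟨hmin, _⟩
    · rw [hT, hmin]
      have := mul_pos (Real.exp_pos (144:ℝ)) (Real.exp_pos (-(4 * α)))
      linarith
    · rw [hT, hmin]
      rw [← Real.exp_add]
      have heq : (144 : ℝ) + -(4 * α) = -(4 * α - 144) := by ring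
      rw [heq]
      have := Real.exp_pos (-(α ^ 2 / 32))
      linarith
  have habs1 : α ^ 3 * Real.exp (-(α ^ 2 / 32))
      ≤ (128 ^ 3 + 27) * (Real.exp (-(α ^ 2 / 32)) + Real.exp (-α)) := by
    rcases le_or_gt α 128 with hcase | hcase
    · have hp : α ^ 3 ≤ 128 ^ 3 := pow_le_pow_left₀ hα0.le hcase 3
      linarith [Real.exp_pos (-(α ^ 2 / 32)), Real.exp_pos (-α),
        mul_le_mul_of_nonneg_right hp (Real.exp_pos (-(α ^ 2 / 32))).le]
    · have hE : Real.exp (-(α ^ 2 / 32)) ≤ Real.exp (-(4 * α)) :=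
        Real.exp_le_exp.mpr (by nlinarith)
      have step : α ^ 3 * Real.exp (-(α ^ 2 / 32)) ≤ 27 * Real.exp α * Real.exp (-(4 * α)) := by
        apply mul_le_mul hcube hE (Real.exp_pos _).le (by positivity)
      have e1 : 27 * Real.exp α * Real.exp (-(4 * α)) = 27 * Real.exp (-(3 * α)) := by
        rw [mul_assoc, ← Real.exp_add]
        congr 2
        ring
      have e2 : Real.exp (-(3 * α)) ≤ Real.exp (-α) := Real.exp_le_exp.mpr (by linarith)
      linarith [Real.exp_pos (-(α ^ 2 / 32)), Real.exp_pos (-α)]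
  have habs2 : α ^ 3 * (Real.exp 144 * Real.exp (-(4 * α)))
      ≤ 27 * Real.exp 144 * Real.exp (-α) := by
    have step : α ^ 3 * Real.exp (-(4 * α)) ≤ 27 * Real.exp α * Real.exp (-(4 * α)) :=
      mul_le_mul_of_nonneg_right hcube (Real.exp_pos _).le
    have e1 : 27 * Real.exp α * Real.exp (-(4 * α)) = 27 * Real.exp (-(3 * α)) := by
      rw [mul_assoc, ← Real.exp_add]
      congr 2
      ring
    have e2 : Real.exp (-(3 * α)) ≤ Real.exp (-α) := Real.exp_le_exp.mpr (by linarith)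
    have h144 := (Real.exp_pos (144:ℝ)).le
    nlinarith [Real.exp_pos (-(4 * α))]
  have hfinal : α ^ 3 * Real.exp (-T) ≤ ((128 ^ 3 + 27) + 27 * Real.exp 144) *
      (Real.exp (-(α ^ 2 / 32)) + Real.exp (-α)) := by
    have h1 := mul_le_mul_of_nonneg_left hsplit (by positivity : (0:ℝ) ≤ α ^ 3)
    have h144 := (Real.exp_pos (144:ℝ)).le
    nlinarith [Real.exp_pos (-(α ^ 2 / 32)), Real.exp_pos (-α)]
  -- put everything together
  have hα3pos : (0:ℝ) < α ^ 3 := by positivity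
  have hdiv : Real.exp (-T) ≤ ((128 ^ 3 + 27) + 27 * Real.exp 144) *
      (Real.exp (-(α ^ 2 / 32)) + Real.exp (-α)) / α ^ 3 := by
    rw [le_div_iff₀ hα3pos]
    linarith [hfinal]
  have hE4 : Real.exp (4 - T) = Real.exp 4 * Real.exp (-T) := by
    rw [← Real.exp_add, sub_eq_add_neg]
  have hgoal_eq : Real.exp (-α ^ 2 / 32) = Real.exp (-(α ^ 2 / 32)) := by
    congr 1
    ring
  rw [hgoal_eq]
  calc ∑ y ∈ Y.erase n, I z y
      ≤ (c0 * Real.exp (4 - T)) * (125 / (1 - Real.exp (-(1/8 : ℝ))) ^ 3) := hsum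
    _ = (c0 * Real.exp 4 * (125 / (1 - Real.exp (-(1/8 : ℝ))) ^ 3)) * Real.exp (-T) := by
        rw [hE4]; ring
    _ ≤ (c0 * Real.exp 4 * (125 / (1 - Real.exp (-(1/8 : ℝ))) ^ 3)) *
        (((128 ^ 3 + 27) + 27 * Real.exp 144) *
          (Real.exp (-(α ^ 2 / 32)) + Real.exp (-α)) / α ^ 3) := by
        apply mul_le_mul_of_nonneg_left hdiv (by positivity)
    _ = c0 * Real.exp 4 * (125 / (1 - Real.exp (-(1/8 : ℝ))) ^ 3) *
        ((128 ^ 3 + 27) + 27 * Real.exp 144) *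
        (Real.exp (-(α ^ 2 / 32)) + Real.exp (-α)) / α ^ 3 := by
        ring
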